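/- Let S(r) be an unbounded positive non-decreasing right-continuous function on [1, ∞), let A > 1, B > 1 and G = {r ≥ 1 : S(Ar) ≥ B·S(r)}. Then the upper logarithmic density of G satisfies limsup_{r→∞} (1/log r)·∫_{[1,r]∩G} dt/t ≤ (log A / log B)·limsup_{r→∞} (log⁺ S(r))/log r. -/

import Mathlib

open Filter MeasureTheory Set intervalIntegral

theorem stmt18_key (S : ℝ → ℝ) (A B : ℝ) (hA : 1 < A) (hB : 1 < B)
    (hpos : ∀ r : ℝ, 1 ≤ r → 0 < S r) (hmono : MonotoneOn S (Set.Ici 1)) :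
    ∃ C : ℝ, ∀ r : ℝ, 1 ≤ r →
      (∫ t in Set.Icc 1 r ∩ {u : ℝ | 1 ≤ u ∧ B * S u ≤ S (A * u)}, (1 / t)) * Real.log B
        ≤ Real.log A * max (Real.log (S (A * r))) 0 + C := by
  have hA0 : (0:ℝ) < A := lt_trans one_pos hA
  set T : ℝ → ℝ := fun t => S (max t 1) with hT
  have hTmono : Monotone T := fun x y h =>
    hmono (Set.mem_Ici.2 (le_max_right _ _)) (Set.mem_Ici.2 (le_max_right _ _))
      (max_le_max h le_rfl)
  have hTpos : ∀ t, 0 < T t := fun t => hpos _ (le_max_right _ _)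
  have hTS : ∀ t : ℝ, 1 ≤ t → T t = S t := fun t ht => by
    simp only [hT, max_eq_left ht]
  set φ : ℝ → ℝ := fun t => Real.log (T t) with hφ
  have hφmono : Monotone φ := fun x y h => Real.log_le_log (hTpos x) (hTmono h)
  have hφmeas : Measurable φ := hφmono.measurable
  set g : ℝ → ℝ := fun u => φ u / u with hg
  have hgmeas : Measurable g := hφmeas.div measurable_id
  -- integrability of g on compacts within [1, ∞)
  have hgint : ∀ a b : ℝ, 1 ≤ a → IntegrableOn g (Set.Icc a b) := by
    intro a b ha
    apply Measure.integrableOn_of_bounded (M := max |φ a| |φ b|)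
      measure_Icc_lt_top.ne hgmeas.aestronglyMeasurable
    filter_upwards [ae_restrict_mem measurableSet_Icc] with u hu
    have hu1 : (1:ℝ) ≤ u := le_trans ha hu.1
    have h1 : |φ u| ≤ max |φ a| |φ b| := abs_le_max_abs_abs (hφmono hu.1) (hφmono hu.2)
    have h2 : ‖g u‖ = |φ u| / |u| := by simp [hg, abs_div]
    rw [h2]
    have hu0 : (1:ℝ) ≤ |u| := by rw [abs_of_pos (lt_of_lt_of_le one_pos hu1)]; exact hu1
    calc |φ u| / |u| ≤ |φ u| / 1 := by gcongr
      _ = |φ u| := div_one _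
      _ ≤ _ := h1
  have hgii : ∀ a b : ℝ, 1 ≤ a → a ≤ b → IntervalIntegrable g volume a b := by
    intro a b ha hab
    rw [intervalIntegrable_iff_integrableOn_Ioc_of_le hab]
    exact (hgint a b ha).mono_set Set.Ioc_subset_Icc_self
  use -∫ u in (1:ℝ)..A, g u
  intro r hr
  have hr0 : (0:ℝ) < r := lt_of_lt_of_le one_pos hr
  have hAr1 : (1:ℝ) ≤ A * r := by nlinarith
  have hrAr : r ≤ A * r := by nlinarith
  -- the set
  set Gs : Set ℝ := {u : ℝ | 1 ≤ u ∧ B * S u ≤ S (A * u)} with hGs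
  have hGsub : ∀ u ∈ Gs, B * T u ≤ T (A * u) := by
    intro u hu
    have hu1 : (1:ℝ) ≤ u := hu.1
    have hAu : (1:ℝ) ≤ A * u := by nlinarith
    rw [hTS u hu1, hTS _ hAu]; exact hu.2
  have hTmeas : Measurable T := hTmono.measurable
  have hGmeas : MeasurableSet Gs := by
    have heq : Gs = Set.Ici 1 ∩ {u : ℝ | B * T u ≤ T (A * u)} := by
      ext u
      simp only [hGs, Set.mem_setOf_eq, Set.mem_inter_iff, Set.mem_Ici]
      constructor
      · rintro ⟨h1, h2⟩
        exact ⟨h1, by rw [hTS u h1, hTS _ (by nlinarith)]; exact h2⟩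
      · rintro ⟨h1, h2⟩
        exact ⟨h1, by rw [hTS u h1, hTS _ (by nlinarith)] at h2; exact h2⟩
    rw [heq]
    exact measurableSet_Ici.inter
      (measurableSet_le (measurable_const.mul hTmeas)
        (hTmeas.comp (measurable_id.const_mul A)))
  -- integrand ψ t = (φ (A t) - φ t)/t, integrable on Icc 1 r
  set ψ : ℝ → ℝ := fun t => (φ (A * t) - φ t) / t with hψ
  have hψmeas : Measurable ψ :=
    ((hφmeas.comp (measurable_id.const_mul A)).sub hφmeas).div measurable_id
  have hψnonneg : ∀ t : ℝ, 1 ≤ t → 0 ≤ ψ t := by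
    intro t ht
    have h1 : φ t ≤ φ (A * t) := hφmono (by nlinarith)
    have ht0 : (0:ℝ) < t := lt_of_lt_of_le one_pos ht
    exact div_nonneg (by linarith) ht0.le
  have hψint : IntegrableOn ψ (Set.Icc 1 r) := by
    apply Measure.integrableOn_of_bounded (M := φ (A * r) - φ 1)
      measure_Icc_lt_top.ne hψmeas.aestronglyMeasurable
    filter_upwards [ae_restrict_mem measurableSet_Icc] with t ht
    have ht1 : (1:ℝ) ≤ t := ht.1
    have ht0 : (0:ℝ) < t := lt_of_lt_of_le one_pos ht1
    have h1 : φ t ≤ φ (A * t) := hφmono (by nlinarith)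
    have h2 : φ (A * t) ≤ φ (A * r) := hφmono (by nlinarith [ht.2])
    have h3 : φ 1 ≤ φ t := hφmono ht1
    rw [Real.norm_eq_abs, hψ, abs_of_nonneg (hψnonneg t ht1)]
    calc (φ (A * t) - φ t) / t ≤ (φ (A * t) - φ t) / 1 := by gcongr
      _ = φ (A * t) - φ t := div_one _
      _ ≤ φ (A * r) - φ 1 := by linarith
  -- step 1 : multiply inside
  have step1 : (∫ t in Set.Icc 1 r ∩ Gs, (1 / t)) * Real.log B
      = ∫ t in Set.Icc 1 r ∩ Gs, Real.log B / t := by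
    rw [← MeasureTheory.integral_mul_const]
    congr 1
    funext t
    ring
  -- step 2 : pointwise bound on the set
  have hint1 : IntegrableOn (fun t => Real.log B / t) (Set.Icc 1 r) := by
    apply ContinuousOn.integrableOn_Icc
    apply ContinuousOn.div continuousOn_const continuousOn_id
    intro x hx
    exact ne_of_gt (lt_of_lt_of_le one_pos hx.1)
  have step2 : (∫ t in Set.Icc 1 r ∩ Gs, Real.log B / t)
      ≤ ∫ t in Set.Icc 1 r ∩ Gs, ψ t := by
    apply setIntegral_mono_on
    · exact hint1.mono_set Set.inter_subset_left
    · exact hψint.mono_set Set.inter_subset_left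
    · exact measurableSet_Icc.inter hGmeas
    · rintro t ⟨ht, htG⟩
      have ht1 : (1:ℝ) ≤ t := ht.1
      have ht0 : (0:ℝ) < t := lt_of_lt_of_le one_pos ht1
      have hkey : Real.log B ≤ φ (A * t) - φ t := by
        have h1 : B * T t ≤ T (A * t) := hGsub t htG
        have h2 : Real.log (B * T t) ≤ Real.log (T (A * t)) :=
          Real.log_le_log (mul_pos (lt_trans one_pos hB) (hTpos t)) h1
        rw [Real.log_mul (ne_of_gt (lt_trans one_pos hB)) (ne_of_gt (hTpos t))] at h2
        simp only [hφ]; linarith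
      show Real.log B / t ≤ (φ (A * t) - φ t) / t
      gcongr
  -- step 3 : enlarge the set
  have step3 : (∫ t in Set.Icc 1 r ∩ Gs, ψ t) ≤ ∫ t in Set.Icc 1 r, ψ t := by
    apply setIntegral_mono_set hψint
    · filter_upwards [ae_restrict_mem measurableSet_Icc] with t ht
      exact hψnonneg t ht.1
    · exact (Set.inter_subset_left).eventuallyLE
  -- step 4 : pass to interval integral and compute
  have step4 : (∫ t in Set.Icc 1 r, ψ t)
      = (∫ u in r..(A*r), g u) - ∫ u in (1:ℝ)..A, g u := by
    have e1 : (∫ t in Set.Icc 1 r, ψ t) = ∫ t in (1:ℝ)..r, ψ t := by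
      rw [intervalIntegral.integral_of_le hr, integral_Icc_eq_integral_Ioc]
    rw [e1]
    have e2 : (∫ t in (1:ℝ)..r, ψ t) = ∫ t in (1:ℝ)..r, (A * g (A * t) - g t) := by
      apply intervalIntegral.integral_congr
      intro t ht
      rw [Set.uIcc_of_le hr] at ht
      have ht0 : (0:ℝ) < t := lt_of_lt_of_le one_pos ht.1
      simp only [hψ, hg]
      field_simp
    rw [e2]
    have hii1 : IntervalIntegrable (fun t => A * g (A * t)) volume 1 r := by
      have h := ((hgii A (A*r) (by linarith) (by nlinarith)).comp_mul_left (c := A))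
      have hA' : A / A = 1 := div_self (ne_of_gt hA0)
      have hAr' : A * r / A = r := by field_simp
      rw [hA', hAr'] at h
      exact h.const_mul A
    have hii2 : IntervalIntegrable g volume 1 r := hgii 1 r le_rfl hr
    rw [intervalIntegral.integral_sub hii1 hii2]
    have e3 : (∫ t in (1:ℝ)..r, A * g (A * t)) = ∫ u in A..(A*r), g u := by
      rw [intervalIntegral.integral_const_mul, integral_comp_mul_left g (ne_of_gt hA0)]
      simp only [smul_eq_mul, mul_one]
      rw [← mul_assoc, mul_inv_cancel₀ (ne_of_gt hA0), one_mul]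
    rw [e3]
    have add1 : (∫ u in (1:ℝ)..A, g u) + (∫ u in A..(A*r), g u) = ∫ u in (1:ℝ)..(A*r), g u :=
      intervalIntegral.integral_add_adjacent_intervals (hgii 1 A le_rfl hA.le)
        (hgii A (A*r) hA.le (by nlinarith))
    have add2 : (∫ u in (1:ℝ)..r, g u) + (∫ u in r..(A*r), g u) = ∫ u in (1:ℝ)..(A*r), g u :=
      intervalIntegral.integral_add_adjacent_intervals (hgii 1 r le_rfl hr)
        (hgii r (A*r) hr hrAr)
    linarith
  -- step 5 : bound the tail integral
  have step5 : (∫ u in r..(A*r), g u) ≤ φ (A * r) * Real.log A := by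
    have hb : (∫ u in r..(A*r), g u) ≤ ∫ u in r..(A*r), φ (A*r) * (1/u) := by
      apply intervalIntegral.integral_mono_on hrAr (hgii r (A*r) hr hrAr)
      · apply IntervalIntegrable.const_mul
        apply intervalIntegral.intervalIntegrable_one_div
        · intro x hx
          rw [Set.uIcc_of_le hrAr] at hx
          exact ne_of_gt (lt_of_lt_of_le hr0 hx.1)
        · exact continuousOn_id
      · intro u hu
        have hu0 : (0:ℝ) < u := lt_of_lt_of_le hr0 hu.1
        have h1 : φ u ≤ φ (A * r) := hφmono hu.2
        rw [hg]
        calc φ u / u ≤ φ (A*r) / u := by gcongr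
          _ = φ (A*r) * (1/u) := by ring
    have hc : (∫ u in r..(A*r), φ (A*r) * (1/u)) = φ (A*r) * Real.log A := by
      rw [intervalIntegral.integral_const_mul, integral_one_div]
      · congr 1
        rw [mul_div_assoc, div_self (ne_of_gt hr0), mul_one]
      · intro h
        rw [Set.uIcc_of_le hrAr] at h
        exact absurd h.1 (not_le.2 hr0)
    linarith
  -- step 6 : φ (A r) ≤ log⁺ S (A r)
  have step6 : φ (A * r) * Real.log A ≤ Real.log A * max (Real.log (S (A * r))) 0 := by
    have : φ (A * r) = Real.log (S (A * r)) := by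
      show Real.log (T (A * r)) = _
      rw [hTS _ hAr1]
    rw [this, mul_comm]
    have hlA : 0 ≤ Real.log A := Real.log_nonneg hA.le
    gcongr
    exact le_max_left _ _
  calc (∫ t in Set.Icc 1 r ∩ Gs, (1 / t)) * Real.log B
      = ∫ t in Set.Icc 1 r ∩ Gs, Real.log B / t := step1
    _ ≤ ∫ t in Set.Icc 1 r ∩ Gs, ψ t := step2
    _ ≤ ∫ t in Set.Icc 1 r, ψ t := step3
    _ = (∫ u in r..(A*r), g u) - ∫ u in (1:ℝ)..A, g u := step4
    _ ≤ φ (A * r) * Real.log A - ∫ u in (1:ℝ)..A, g u := by linarith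
    _ ≤ Real.log A * max (Real.log (S (A * r))) 0 + -∫ u in (1:ℝ)..A, g u := by linarith

theorem stmt_18 (S : ℝ → ℝ) (A B : ℝ) (hA : 1 < A) (hB : 1 < B)
    (hpos : ∀ r : ℝ, 1 ≤ r → 0 < S r)
    (hmono : MonotoneOn S (Set.Ici 1))
    (hrc : ∀ r : ℝ, 1 ≤ r → ContinuousWithinAt S (Set.Ici r) r)
    (hunb : ¬ BddAbove (S '' Set.Ici 1)) :
    Filter.limsup
        (fun r : ℝ =>
          (((∫ t in Set.Icc 1 r ∩ {u : ℝ | 1 ≤ u ∧ B * S u ≤ S (A * u)}, (1 / t))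
            / Real.log r : ℝ) : EReal))
        Filter.atTop
      ≤ ((Real.log A / Real.log B : ℝ) : EReal)
        * Filter.limsup
            (fun r : ℝ => ((max (Real.log (S r)) 0 / Real.log r : ℝ) : EReal))
            Filter.atTop := by
  obtain ⟨C₀, hC₀⟩ := stmt18_key S A B hA hB hpos hmono
  have hA0 : (0:ℝ) < A := lt_trans one_pos hA
  have hlogA : 0 < Real.log A := Real.log_pos hA
  have hlogB : 0 < Real.log B := Real.log_pos hB
  set c : ℝ := Real.log A / Real.log B with hc
  have hc0 : 0 < c := div_pos hlogA hlogB
  set C : ℝ := C₀ / Real.log B with hC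
  set P : ℝ → ℝ := fun x => max (Real.log (S x)) 0 with hP
  set I : ℝ → ℝ := fun r =>
    ∫ t in Set.Icc 1 r ∩ {u : ℝ | 1 ≤ u ∧ B * S u ≤ S (A * u)}, (1 / t) with hI
  have hIb : ∀ r : ℝ, 1 ≤ r → I r ≤ c * P (A * r) + C := by
    intro r hr
    have h := hC₀ r hr
    have h2 : I r ≤ (Real.log A * P (A * r) + C₀) / Real.log B :=
      (le_div_iff₀ hlogB).2 h
    calc I r ≤ (Real.log A * P (A * r) + C₀) / Real.log B := h2
      _ = c * P (A * r) + C := by rw [hc, hC]; ring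
  set F : ℝ → EReal := fun r => ((I r / Real.log r : ℝ) : EReal) with hF
  set Q : ℝ → EReal := fun r => ((P r / Real.log r : ℝ) : EReal) with hQ
  show limsup F atTop ≤ ((c : ℝ) : EReal) * limsup Q atTop
  have claim : ∀ M : ℝ, limsup Q atTop < ((M : ℝ) : EReal) →
      limsup F atTop ≤ ((c * M : ℝ) : EReal) := by
    intro M hM
    have hev : ∀ᶠ r in atTop, Q r < ((M : ℝ) : EReal) := eventually_lt_of_limsup_lt hM
    have hev' : ∀ᶠ r in atTop, P r / Real.log r < M := by
      filter_upwards [hev] with r h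
      simp only [hQ] at h
      exact_mod_cast h
    have htend : Tendsto (fun r : ℝ => A * r) atTop atTop :=
      Tendsto.const_mul_atTop hA0 tendsto_id
    have hev2 : ∀ᶠ r in atTop, P (A * r) / Real.log (A * r) < M := htend.eventually hev'
    have hev3 : ∀ᶠ r in atTop,
        F r ≤ (((c * M * (Real.log A + Real.log r) + C) / Real.log r : ℝ) : EReal) := by
      filter_upwards [hev2, eventually_ge_atTop (2:ℝ)] with r h2 hr2
      have hr1 : (1:ℝ) ≤ r := by linarith
      have hlr : 0 < Real.log r := Real.log_pos (by linarith)
      have hAr1 : (1:ℝ) < A * r := by nlinarith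
      have hlAr : 0 < Real.log (A * r) := Real.log_pos hAr1
      have hPb : P (A * r) ≤ M * Real.log (A * r) := by
        have := (div_lt_iff₀ hlAr).1 h2; linarith
      have hI2 : I r ≤ c * M * Real.log (A * r) + C := by
        have h3 : c * P (A * r) ≤ c * (M * Real.log (A * r)) :=
          mul_le_mul_of_nonneg_left hPb hc0.le
        have h4 := hIb r hr1
        nlinarith
      have hlog : Real.log (A * r) = Real.log A + Real.log r :=
        Real.log_mul (ne_of_gt hA0) (ne_of_gt (by linarith : (0:ℝ) < r))
      apply EReal.coe_le_coe_iff.2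
      rw [← hlog]
      gcongr
    have htd : Tendsto (fun r : ℝ => (c * M * (Real.log A + Real.log r) + C) / Real.log r)
        atTop (nhds (c * M)) := by
      have h2 : Tendsto (fun r : ℝ => (c * M * Real.log A + C) / Real.log r) atTop (nhds 0) :=
        Tendsto.div_atTop tendsto_const_nhds Real.tendsto_log_atTop
      have h1 : Tendsto (fun r : ℝ => (c * M * Real.log A + C) / Real.log r + c * M)
          atTop (nhds (c * M)) := by
        have := h2.add (tendsto_const_nhds (x := c * M))
        simpa using this
      apply h1.congr'
      filter_upwards [eventually_gt_atTop (1:ℝ)] with r hr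
      have hlr : Real.log r ≠ 0 := ne_of_gt (Real.log_pos hr)
      field_simp
      ring
    have hlim : limsup
        (fun r : ℝ => (((c * M * (Real.log A + Real.log r) + C) / Real.log r : ℝ) : EReal))
        atTop = ((c * M : ℝ) : EReal) :=
      ((continuous_coe_real_ereal.tendsto _).comp htd).limsup_eq
    calc limsup F atTop
        ≤ limsup (fun r : ℝ =>
            (((c * M * (Real.log A + Real.log r) + C) / Real.log r : ℝ) : EReal)) atTop :=
          limsup_le_limsup hev3
      _ = _ := hlim
  set L := limsup Q atTop with hL
  have hL0 : (0 : EReal) ≤ L := by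
    apply le_limsup_of_frequently_le _ Filter.isBounded_le_of_top
    apply Filter.Eventually.frequently
    filter_upwards [eventually_gt_atTop (1:ℝ)] with r hr
    have h0 : (0:ℝ) ≤ P r / Real.log r := div_nonneg (le_max_right _ _) (Real.log_pos hr).le
    simp only [hQ]
    exact_mod_cast h0
  rcases eq_or_ne L ⊤ with hLtop | hLne
  · rw [hLtop, EReal.mul_top_of_pos (by exact_mod_cast hc0)]
    exact le_top
  · have hLbot : L ≠ ⊥ := fun h => by rw [h] at hL0; exact absurd hL0 (by simp)
    have hLr : L = ((L.toReal : ℝ) : EReal) := (EReal.coe_toReal hLne hLbot).symm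
    rw [hLr, ← EReal.coe_mul]
    by_contra hcon
    push_neg at hcon
    obtain ⟨x, hx1, hx2⟩ := EReal.lt_iff_exists_real_btwn.1 hcon
    have hM : L < ((x / c : ℝ) : EReal) := by
      rw [hLr]
      apply EReal.coe_lt_coe_iff.2
      rw [lt_div_iff₀ hc0]
      have hx1' : c * L.toReal < x := by exact_mod_cast hx1
      linarith
    have hcl := claim (x / c) hM
    have hcx : c * (x / c) = x := by field_simp
    rw [hcx] at hcl
    exact absurd (lt_of_lt_of_le hx2 hcl) (lt_irrefl _)
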